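/- arXiv:math/0404499 — 3 statements merged into one kernel-verified Lean document; each statement's English description precedes it below -/
import Mathlib

section
/- Let G be a nilpotent group of class two which is minimally generated by elements x₁, …, x_m, where x_i has order 2^(r_i) and 1 ≤ r₁ ≤ r₂ ≤ ⋯ ≤ r_m. If G is capable, then m > 1 and r_m ≤ r_(m-1) + 1. -/
universe u

open scoped commutatorElement

private lemma two_mul_choose_two' : ∀ s : ℕ, 2 * Nat.choose (s + 1) 2 = (s + 1) * s := by
  intro s
  induction s with
  | zero => decide
  | succ t ih =>
    rw [Nat.choose_succ_succ (t + 1) 1, Nat.choose_one_right, Nat.mul_add, ih]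
    ring

private lemma choose_succ_two (s : ℕ) : Nat.choose (s + 1) 2 = Nat.choose s 2 + s := by
  have h := Nat.choose_succ_succ s 1
  rw [Nat.choose_one_right] at h
  rw [h]
  have : Nat.succ 1 = 2 := rfl
  rw [this] at h ⊢
  omega

private lemma commA {K : Type u} [Group K] (a b : K)
    (hd : ⁅a, ⁅a, b⁆⁆ ∈ Subgroup.center K) :
    ∀ s : ℕ, ⁅a ^ s, b⁆ = ⁅a, b⁆ ^ s * ⁅a, ⁅a, b⁆⁆ ^ (Nat.choose s 2) := by
  set c := ⁅a, b⁆ with hc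
  set d := ⁅a, c⁆ with hdd
  have hdcom : ∀ g : K, g * d = d * g := Subgroup.mem_center_iff.mp hd
  have Cad : Commute a d := hdcom a
  have Ccd : Commute c d := hdcom c
  intro s
  induction s with
  | zero => simp
  | succ s ih =>
    set e := Nat.choose s 2 with he
    have key : ⁅a ^ (s+1), b⁆ = a * ⁅a ^ s, b⁆ * a⁻¹ * c := by
      simp only [commutatorElement_def, hc]
      group
    have hconj : a * c * a⁻¹ = d * c := by
      rw [hdd]; simp only [commutatorElement_def]; group
    have hchoose : Nat.choose (s+1) 2 = e + s := choose_succ_two s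
    have h1 : a * (c ^ s * d ^ e) * a⁻¹ = (a * c * a⁻¹) ^ s * d ^ e := by
      rw [conj_pow]
      calc a * (c ^ s * d ^ e) * a⁻¹ = a * c ^ s * (d ^ e * a⁻¹) := by group
        _ = a * c ^ s * (a⁻¹ * d ^ e) := by rw [((Cad.pow_right e).inv_left.eq).symm]
        _ = a * c ^ s * a⁻¹ * d ^ e := by group
    calc ⁅a ^ (s+1), b⁆ = a * (c ^ s * d ^ e) * a⁻¹ * c := by rw [key, ih]
      _ = (a * c * a⁻¹) ^ s * d ^ e * c := by rw [h1]
      _ = (d * c) ^ s * d ^ e * c := by rw [hconj]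
      _ = d ^ s * c ^ s * d ^ e * c := by rw [Ccd.symm.mul_pow]
      _ = d ^ s * d ^ e * (c ^ s * c) := by
            rw [mul_assoc (d ^ s), ((Ccd.pow_pow s e).eq), mul_assoc, mul_assoc, mul_assoc]
      _ = d ^ (s + e) * c ^ (s + 1) := by rw [← pow_succ, ← pow_add]
      _ = c ^ (s + 1) * d ^ (s + e) := ((Ccd.pow_pow (s+1) (s+e)).eq).symm
      _ = c ^ (s + 1) * d ^ (Nat.choose (s+1) 2) := by rw [hchoose, Nat.add_comm s e]

private lemma commB {K : Type u} [Group K] (a b : K)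
    (hd : ⁅b, ⁅b, a⁆⁆ ∈ Subgroup.center K) (t : ℕ) :
    ⁅a, b ^ t⁆ = ⁅a, b⁆ ^ t * (⁅b, ⁅b, a⁆⁆⁻¹) ^ (Nat.choose t 2) := by
  have h := commA b a hd t
  have hdcom : ∀ g : K, g * ⁅b, ⁅b, a⁆⁆ = ⁅b, ⁅b, a⁆⁆ * g := Subgroup.mem_center_iff.mp hd
  have hC0 : Commute ⁅a, b⁆ ⁅b, ⁅b, a⁆⁆ := hdcom ⁅a, b⁆
  have hC : Commute ⁅a, b⁆ (⁅b, ⁅b, a⁆⁆⁻¹) := hC0.inv_right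
  calc ⁅a, b ^ t⁆ = ⁅b ^ t, a⁆⁻¹ := (commutatorElement_inv _ _).symm
    _ = (⁅b, a⁆ ^ t * ⁅b, ⁅b, a⁆⁆ ^ (Nat.choose t 2))⁻¹ := by rw [h]
    _ = (⁅b, ⁅b, a⁆⁆⁻¹) ^ (Nat.choose t 2) * (⁅b, a⁆⁻¹) ^ t := by
          rw [mul_inv_rev, ← inv_pow, ← inv_pow]
    _ = (⁅b, ⁅b, a⁆⁆⁻¹) ^ (Nat.choose t 2) * ⁅a, b⁆ ^ t := by rw [commutatorElement_inv b a]
    _ = ⁅a, b⁆ ^ t * (⁅b, ⁅b, a⁆⁆⁻¹) ^ (Nat.choose t 2) := ((hC.pow_pow _ _).eq).symm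


private lemma two_mul_choose_two {s : ℕ} (hs : 1 ≤ s) :
    2 * Nat.choose s 2 = s * (s - 1) := by
  have ht : s - 1 + 1 = s := by omega
  rw [← ht]
  simpa using two_mul_choose_two' (s - 1)


/-- A group is capable if it is isomorphic to `K/Z(K)` for some group `K`. -/
def IsCapable (G : Type u) [Group G] : Prop :=
  ∃ (K : Type u) (_ : Group K), Nonempty ((K ⧸ Subgroup.center K) ≃* G)

/-- Let `G` be a nilpotent group of class two, minimally generated by `x₁, …, x_m`
with `orderOf (x i) = 2 ^ r i` and `1 ≤ r₁ ≤ ⋯ ≤ r_m`.  If `G` is capable then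
`m > 1` and `r_m ≤ r_{m-1} + 1`. -/
theorem capable_class_two_order_condition {G : Type u} [Group G] {m : ℕ}
    (x : Fin m → G) (r : Fin m → ℕ)
    (hgen : Subgroup.closure (Set.range x) = ⊤)
    (hmin : ∀ S : Set G, S ⊂ Set.range x → Subgroup.closure S ≠ ⊤)
    (hr : ∀ i, 1 ≤ r i) (hmono : Monotone r)
    (hord : ∀ i, orderOf (x i) = 2 ^ r i)
    (hclass2 : (⊤ : Subgroup G).lowerCentralSeries 2 = ⊥)
    (hnonab : (⊤ : Subgroup G).lowerCentralSeries 1 ≠ ⊥)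
    (hcap : IsCapable G) :
    ∃ hm : 1 < m, r ⟨m - 1, by omega⟩ ≤ r ⟨m - 2, by omega⟩ + 1 := by
  -- Step 0 : m > 1
  have hm : 1 < m := by
    by_contra hle
    push_neg at hle
    apply hnonab
    have hcomm : ∀ g h : G, g * h = h * g := by
      interval_cases m
      · have h0 : (Set.range x) = (∅ : Set G) := Set.range_eq_empty x
        rw [h0, Subgroup.closure_empty] at hgen
        intro g h
        have hg : g ∈ (⊥ : Subgroup G) := hgen ▸ Subgroup.mem_top g
        have hh : h ∈ (⊥ : Subgroup G) := hgen ▸ Subgroup.mem_top h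
        rw [Subgroup.mem_bot] at hg hh
        rw [hg, hh]
      · have hx : Set.range x = {x 0} := Set.range_unique
        rw [hx, ← Subgroup.zpowers_eq_closure] at hgen
        intro g h
        obtain ⟨i, hi⟩ := Subgroup.mem_zpowers_iff.mp (hgen ▸ Subgroup.mem_top g)
        obtain ⟨j, hj⟩ := Subgroup.mem_zpowers_iff.mp (hgen ▸ Subgroup.mem_top h)
        rw [← hi, ← hj]
        exact ((Commute.refl (x 0)).zpow_zpow i j).eq
    rw [Subgroup.lowerCentralSeries_succ, Subgroup.lowerCentralSeries_zero, eq_bot_iff]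
    rw [Subgroup.commutator_def, Subgroup.closure_le]
    rintro w ⟨p, -, q, -, rfl⟩
    have h1 : p * q * p⁻¹ * q⁻¹ = 1 := by rw [hcomm p q]; group
    simp [commutatorElement_def, h1, Subgroup.mem_bot]
  refine ⟨hm, ?_⟩
  obtain ⟨K, _, ⟨e⟩⟩ := hcap
  set π : K →* G := e.toMonoidHom.comp (QuotientGroup.mk' (Subgroup.center K)) with hπ
  have hπsurj : Function.Surjective π :=
    e.surjective.comp (QuotientGroup.mk'_surjective _)
  have hker : ∀ w : K, π w = 1 ↔ w ∈ Subgroup.center K := by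
    intro w
    rw [hπ, MonoidHom.comp_apply]
    rw [MulEquiv.coe_toMonoidHom, EmbeddingLike.map_eq_one_iff]
    exact QuotientGroup.eq_one_iff w
  choose y hy using fun j => hπsurj (x j)
  -- γ₃(K) ≤ Z(K)
  have hγ : ∀ w ∈ (⊤ : Subgroup K).lowerCentralSeries 2, w ∈ Subgroup.center K := by
    intro w hw
    have h1 : π w ∈ (⊤ : Subgroup G).lowerCentralSeries 2 := by
        rw [← Subgroup.map_top_of_surjective π hπsurj, ← Subgroup.map_lowerCentralSeries]
        exact ⟨w, hw, rfl⟩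
    rw [hclass2, Subgroup.mem_bot] at h1
    exact (hker w).mp h1
  have hγ2 : ∀ a b : K, ⁅a, b⁆ ∈ (⊤ : Subgroup K).lowerCentralSeries 1 := by
    intro a b
    rw [Subgroup.lowerCentralSeries_succ, Subgroup.lowerCentralSeries_zero]
    exact Subgroup.commutator_mem_commutator (Subgroup.mem_top a) (Subgroup.mem_top b)
  have hγ3a : ∀ (g c : K), c ∈ (⊤ : Subgroup K).lowerCentralSeries 1 → ⁅c, g⁆ ∈ Subgroup.center K := by
    intro g c hc
    apply hγ
    rw [Subgroup.lowerCentralSeries_succ]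
    exact Subgroup.commutator_mem_commutator hc (Subgroup.mem_top g)
  have hγ3b : ∀ (g c : K), c ∈ (⊤ : Subgroup K).lowerCentralSeries 1 → ⁅g, c⁆ ∈ Subgroup.center K := by
    intro g c hc
    have h1 := (Subgroup.center K).inv_mem (hγ3a g c hc)
    rwa [commutatorElement_inv] at h1
  have hcent1 : ∀ z : K, z ∈ Subgroup.center K → ∀ g : K, ⁅z, g⁆ = 1 := by
    intro z hz g
    rw [commutatorElement_eq_one_iff_mul_comm]
    exact (Subgroup.mem_center_iff.mp hz g).symm
  have hcent2 : ∀ z : K, z ∈ Subgroup.center K → ∀ g : K, ⁅g, z⁆ = 1 := by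
    intro z hz g
    rw [commutatorElement_eq_one_iff_mul_comm]
    exact Subgroup.mem_center_iff.mp hz g
  set idx1 : Fin m := ⟨m - 1, by omega⟩ with hidx1
  set idx2 : Fin m := ⟨m - 2, by omega⟩ with hidx2
  set n : ℕ := 2 ^ (r idx2 + 1) with hn
  set a : K := y idx1 with ha
  -- powers of lifts are central
  have hzpow : ∀ j : Fin m, (y j) ^ (2 ^ r j) ∈ Subgroup.center K := by
    intro j
    apply (hker _).mp
    rw [map_pow, hy j, ← hord j]
    exact pow_orderOf_eq_one (x j)
  -- main commutator computation
  have hmain : ∀ j : Fin m, ⁅a ^ n, y j⁆ = 1 := by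
    intro j
    by_cases hj : j = idx1
    · subst hj
      rw [commutatorElement_eq_one_iff_commute]
      exact (Commute.refl (y idx1)).pow_left n
    · have hjle : r j ≤ r idx2 := by
        apply hmono
        have hjv : (j : ℕ) ≠ m - 1 := fun h => hj (Fin.ext h)
        have := j.isLt
        simp only [hidx2, Fin.le_def]
        omega
      set b : K := y j with hb
      set s : ℕ := 2 ^ r j with hs
      have hs1 : 1 ≤ s := Nat.one_le_two_pow
      set C : K := ⁅a, b⁆ with hC
      set d2 : K := ⁅b, ⁅b, a⁆⁆ with hd2
      set D : K := ⁅a, C⁆ with hD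
      have hd2mem : d2 ∈ Subgroup.center K := hγ3b b _ (hγ2 b a)
      have hDmem : D ∈ Subgroup.center K := hγ3b a _ (hγ2 a b)
      have hbz : b ^ s ∈ Subgroup.center K := hzpow j
      -- Step 1 : d2 ^ s = 1
      have hd2s : d2 ^ s = 1 := by
        have h1 : ⁅b ^ s, ⁅b, a⁆⁆ = 1 := hcent1 _ hbz _
        have h2 : ⁅b, ⁅b, ⁅b, a⁆⁆⁆ ∈ Subgroup.center K := by
          have : ⁅b, ⁅b, ⁅b, a⁆⁆⁆ = 1 := hcent2 d2 hd2mem b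
          rw [this]
          exact (Subgroup.center K).one_mem
        have h3 := commA b ⁅b, a⁆ h2 s
        rw [h1] at h3
        have h4 : ⁅b, ⁅b, ⁅b, a⁆⁆⁆ = 1 := hcent2 d2 hd2mem b
        rw [h4, one_pow, mul_one] at h3
        exact h3.symm
      -- Step 2 : C ^ s = d2 ^ (choose s 2), hence C ^ (2 ^ (r j + 1)) = 1
      have hCs : C ^ s = d2 ^ (Nat.choose s 2) := by
        have h1 : ⁅a, b ^ s⁆ = 1 := hcent2 _ hbz _
        have h2 := commB a b hd2mem s
        rw [h1] at h2
        have h3 : C ^ s = ((d2⁻¹) ^ Nat.choose s 2)⁻¹ := by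
          rw [eq_inv_iff_mul_eq_one]
          exact h2.symm
        rw [h3, ← inv_pow, inv_inv]
      have hCpow : C ^ (2 ^ (r j + 1)) = 1 := by
        have hseq : 2 ^ (r j + 1) = s * 2 := by rw [hs, pow_succ]
        have h2e : 2 * Nat.choose s 2 = s * (s - 1) := two_mul_choose_two hs1
        calc C ^ (2 ^ (r j + 1)) = (C ^ s) ^ 2 := by rw [hseq, pow_mul]
          _ = (d2 ^ Nat.choose s 2) ^ 2 := by rw [hCs]
          _ = d2 ^ (Nat.choose s 2 * 2) := (pow_mul d2 _ 2).symm
          _ = d2 ^ (s * (s - 1)) := by rw [Nat.mul_comm, h2e]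
          _ = (d2 ^ s) ^ (s - 1) := pow_mul d2 s (s - 1)
          _ = 1 := by rw [hd2s, one_pow]
      have hCn : C ^ n = 1 := by
        obtain ⟨k, hk⟩ : 2 ^ (r j + 1) ∣ n := pow_dvd_pow 2 (by omega)
        rw [hk, pow_mul, hCpow, one_pow]
      -- Step 3 : D ^ s = 1
      have hDt : ∀ t : ℕ, ⁅a, C ^ t⁆ = D ^ t := by
        intro t
        have hinner : ⁅C, a⁆ ∈ Subgroup.center K := hγ3a a C (hγ2 a b)
        have h1 : ⁅C, ⁅C, a⁆⁆ = 1 := hcent2 _ hinner C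
        have h2 : ⁅C, ⁅C, a⁆⁆ ∈ Subgroup.center K := by
          rw [h1]; exact (Subgroup.center K).one_mem
        have h3 := commB a C h2 t
        rw [h1] at h3
        simpa using h3
      have hDs : D ^ s = 1 := by
        have h1 : ⁅a, C ^ s⁆ = 1 := by
          rw [hCs]
          exact hcent2 _ (pow_mem hd2mem _) a
        have h2 := hDt s
        rw [h1] at h2
        exact h2.symm
      -- Step 4 : D ^ (choose n 2) = 1
      have hDchoose : D ^ (Nat.choose n 2) = 1 := by
        have hn1 : 1 ≤ n := Nat.one_le_two_pow
        have h2e : 2 * Nat.choose n 2 = n * (n - 1) := two_mul_choose_two hn1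
        have hn2 : n = 2 * 2 ^ (r idx2) := by rw [hn, pow_succ, Nat.mul_comm]
        have hch : Nat.choose n 2 = 2 ^ (r idx2) * (n - 1) := by
          apply Nat.eq_of_mul_eq_mul_left (show 0 < 2 by norm_num)
          rw [h2e]
          calc n * (n - 1) = 2 * 2 ^ (r idx2) * (n - 1) := by rw [← hn2]
            _ = 2 * (2 ^ (r idx2) * (n - 1)) := by ring
        obtain ⟨t, ht⟩ : s ∣ Nat.choose n 2 := by
          rw [hch]
          exact Dvd.dvd.mul_right (pow_dvd_pow 2 hjle) _
        rw [ht, pow_mul, hDs, one_pow]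
      -- Step 5 : conclude
      have h := commA a b hDmem n
      rw [hCn, hDchoose, one_mul] at h
      exact h
  -- y idx1 ^ n is central
  set z : K := a ^ n with hz
  have hsub : Subgroup.closure (Set.range y ∪ (Subgroup.center K : Set K)) = ⊤ := by
    rw [eq_top_iff]
    intro k _
    have hk : π k ∈ Subgroup.map π (Subgroup.closure (Set.range y)) := by
      rw [MonoidHom.map_closure]
      have himg : π '' Set.range y = Set.range x := by
        rw [← Set.range_comp]
        have hfun : π ∘ y = x := funext hy
        rw [hfun]
      rw [himg, hgen]
      trivial
    obtain ⟨k', hk', hkk⟩ := hk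
    have h1 : k' ∈ Subgroup.closure (Set.range y ∪ (Subgroup.center K : Set K)) :=
      Subgroup.closure_mono Set.subset_union_left hk'
    have h2 : k'⁻¹ * k ∈ Subgroup.center K := by
      apply (hker _).mp
      rw [map_mul, map_inv, hkk]
      group
    have h3 : k'⁻¹ * k ∈ Subgroup.closure (Set.range y ∪ (Subgroup.center K : Set K)) :=
      Subgroup.subset_closure (Set.mem_union_right _ h2)
    have h4 : k = k' * (k'⁻¹ * k) := by group
    rw [h4]
    exact mul_mem h1 h3
  have hcentral : z ∈ Subgroup.center K := by
    rw [Subgroup.mem_center_iff]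
    intro g
    have hle : Subgroup.closure (Set.range y ∪ (Subgroup.center K : Set K)) ≤
        Subgroup.centralizer {z} := by
      rw [Subgroup.closure_le]
      rintro w (⟨j, rfl⟩ | hw)
      · rw [SetLike.mem_coe, Subgroup.mem_centralizer_iff]
        intro h hh
        rw [Set.mem_singleton_iff] at hh
        subst hh
        have hcz : Commute z (y j) := by
          rw [← commutatorElement_eq_one_iff_commute]
          exact hmain j
        exact hcz.eq
      · rw [SetLike.mem_coe, Subgroup.mem_centralizer_iff]
        intro h hh
        rw [Set.mem_singleton_iff] at hh
        subst hh
        exact Subgroup.mem_center_iff.mp hw z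
    have hg : g ∈ Subgroup.centralizer {z} := hle (hsub ▸ Subgroup.mem_top g)
    exact (Subgroup.mem_centralizer_iff.mp hg z rfl).symm
  have hxn : x idx1 ^ n = 1 := by
    have h1 := (hker z).mpr hcentral
    rw [hz, ha, map_pow, hy] at h1
    exact h1
  have hdvd : orderOf (x idx1) ∣ n := orderOf_dvd_of_pow_eq_one hxn
  rw [hord, hn] at hdvd
  exact (Nat.pow_dvd_pow_iff_le_right (by norm_num : (1:ℕ) < 2)).mp hdvd
end

section
/- Let K be a group of nilpotency class at most three, let N be a central subgroup of K such that K/N is isomorphic to the group G presented by ⟨a,b | a^(2^(γ+1)) = b^(2^(γ+1)) = [a,b]^(2^γ) = [a,b,a] = [a,b,b] = e, a^(2^γ) = b^(2^γ) = [a,b]^(2^(γ-1))⟩ with γ ≥ 1, and let x, y ∈ K project to a and b respectively. Then x^(2^γ) ∈ Z(K) but x^(2^γ) ∉ N; in particular N ≠ Z(K). -/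
/-- The paper's commutator convention: `[x,y] = x⁻¹y⁻¹xy`. -/
def pcomm {G : Type*} [Group G] (x y : G) : G := x⁻¹ * y⁻¹ * x * y

/-- Relators of the type (iii) (exceptional type) presentation
`⟨a,b | a^(2^(γ+1)) = b^(2^(γ+1)) = [a,b]^(2^γ) = [a,b,a] = [a,b,b] = e,
  a^(2^γ) = b^(2^γ) = [a,b]^(2^(γ-1))⟩`. -/
def relsIII (γ : ℕ) : Set (FreeGroup (Fin 2)) :=
  let a : FreeGroup (Fin 2) := FreeGroup.of 0
  let b : FreeGroup (Fin 2) := FreeGroup.of 1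
  {a ^ 2 ^ (γ + 1), b ^ 2 ^ (γ + 1), pcomm a b ^ 2 ^ γ,
    pcomm (pcomm a b) a, pcomm (pcomm a b) b,
    a ^ 2 ^ γ * (pcomm a b ^ 2 ^ (γ - 1))⁻¹,
    b ^ 2 ^ γ * (pcomm a b ^ 2 ^ (γ - 1))⁻¹}

namespace ExcAux

@[ext] structure Heis (γ : ℕ) where
  x : ZMod (2 ^ (γ + 1))
  y : ZMod (2 ^ (γ + 1))
  z : ZMod (2 ^ γ)

variable {γ : ℕ}

def cf (γ : ℕ) : ZMod (2 ^ (γ + 1)) →+* ZMod (2 ^ γ) :=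
  ZMod.castHom (pow_dvd_pow 2 (Nat.le_succ γ)) _

@[simp] lemma cf_natCast (n : ℕ) : cf γ (n : ZMod (2 ^ (γ + 1))) = (n : ZMod (2 ^ γ)) :=
  map_natCast _ n

instance : Mul (Heis γ) :=
  ⟨fun a b => ⟨a.x + b.x, a.y + b.y, a.z + b.z + cf γ a.y * cf γ b.x⟩⟩
instance : One (Heis γ) := ⟨⟨0, 0, 0⟩⟩
instance : Inv (Heis γ) := ⟨fun a => ⟨-a.x, -a.y, -a.z + cf γ a.y * cf γ a.x⟩⟩

@[simp] lemma mul_x (a b : Heis γ) : (a * b).x = a.x + b.x := rfl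
@[simp] lemma mul_y (a b : Heis γ) : (a * b).y = a.y + b.y := rfl
@[simp] lemma mul_z (a b : Heis γ) : (a * b).z = a.z + b.z + cf γ a.y * cf γ b.x := rfl
@[simp] lemma one_x : (1 : Heis γ).x = 0 := rfl
@[simp] lemma one_y : (1 : Heis γ).y = 0 := rfl
@[simp] lemma one_z : (1 : Heis γ).z = 0 := rfl
@[simp] lemma inv_x (a : Heis γ) : a⁻¹.x = -a.x := rfl
@[simp] lemma inv_y (a : Heis γ) : a⁻¹.y = -a.y := rfl
@[simp] lemma inv_z (a : Heis γ) : a⁻¹.z = -a.z + cf γ a.y * cf γ a.x := rfl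

instance : Group (Heis γ) where
  mul_assoc a b c := by ext <;> simp [map_add] <;> ring
  one_mul a := by ext <;> simp
  mul_one a := by ext <;> simp
  inv_mul_cancel a := by ext <;> simp [map_neg] <;> try ring

def A : Heis γ := ⟨1, 0, 0⟩
def B : Heis γ := ⟨0, 1, 0⟩

lemma A_pow (n : ℕ) : (A : Heis γ) ^ n = ⟨(n : ZMod (2 ^ (γ + 1))), 0, 0⟩ := by
  induction n with
  | zero => ext <;> simp
  | succ n ih => rw [pow_succ, ih]; ext <;> simp [A] <;> (try push_cast) <;> try ring

lemma B_pow (n : ℕ) : (B : Heis γ) ^ n = ⟨0, (n : ZMod (2 ^ (γ + 1))), 0⟩ := by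
  induction n with
  | zero => ext <;> simp
  | succ n ih => rw [pow_succ, ih]; ext <;> simp [B] <;> (try push_cast) <;> try ring

lemma central (t : ZMod (2 ^ γ)) (g : Heis γ) :
    (⟨0, 0, t⟩ : Heis γ) * g = g * ⟨0, 0, t⟩ := by
  ext <;> simp; ring

lemma pcommAB : pcomm (A : Heis γ) B = ⟨0, 0, -1⟩ := by
  ext <;> simp [pcomm, A, B]

lemma c_pow (n : ℕ) :
    (⟨0, 0, -1⟩ : Heis γ) ^ n = ⟨0, 0, -(n : ZMod (2 ^ γ))⟩ := by
  induction n with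
  | zero => ext <;> simp
  | succ n ih => rw [pow_succ, ih]; ext <;> simp; push_cast; ring

lemma pcomm_eq_one_of_comm {G : Type*} [Group G] {a b : G} (h : a * b = b * a) :
    pcomm a b = 1 := by
  unfold pcomm
  rw [mul_assoc, mul_assoc, h]
  group

/-- the two extra relator elements -/
def u (γ : ℕ) : Heis γ := ⟨((2 ^ γ : ℕ) : ZMod (2 ^ (γ + 1))), 0, ((2 ^ (γ - 1) : ℕ) : ZMod (2 ^ γ))⟩
def v (γ : ℕ) : Heis γ := ⟨0, ((2 ^ γ : ℕ) : ZMod (2 ^ (γ + 1))), ((2 ^ (γ - 1) : ℕ) : ZMod (2 ^ γ))⟩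

section numeric
variable (hγ : 1 ≤ γ)
include hγ

lemma two_h : ((2 ^ γ : ℕ) : ZMod (2 ^ (γ + 1))) + ((2 ^ γ : ℕ) : ZMod (2 ^ (γ + 1))) = 0 := by
  rw [← Nat.cast_add]
  have : 2 ^ γ + 2 ^ γ = 2 ^ (γ + 1) := by ring
  rw [this, ZMod.natCast_self]

lemma two_h' : ((2 ^ (γ - 1) : ℕ) : ZMod (2 ^ γ)) + ((2 ^ (γ - 1) : ℕ) : ZMod (2 ^ γ)) = 0 := by
  rw [← Nat.cast_add]
  have : 2 ^ (γ - 1) + 2 ^ (γ - 1) = 2 ^ γ := by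
    have := Nat.sub_add_cancel hγ
    calc 2 ^ (γ - 1) + 2 ^ (γ - 1) = 2 ^ (γ - 1 + 1) := by ring
    _ = 2 ^ γ := by rw [this]
  rw [this, ZMod.natCast_self]

lemma h_ne : ((2 ^ γ : ℕ) : ZMod (2 ^ (γ + 1))) ≠ 0 := by
  haveI : NeZero (2 ^ (γ + 1)) := ⟨by positivity⟩
  intro h0
  rw [ZMod.natCast_eq_zero_iff] at h0
  have h1 := Nat.le_of_dvd (by positivity) h0
  have h2 : 2 ^ γ < 2 ^ (γ + 1) := Nat.pow_lt_pow_right one_lt_two (by omega)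
  omega

lemma h'_ne : ((2 ^ (γ - 1) : ℕ) : ZMod (2 ^ γ)) ≠ 0 := by
  haveI : NeZero (2 ^ γ) := ⟨by positivity⟩
  intro h0
  rw [ZMod.natCast_eq_zero_iff] at h0
  have h1 := Nat.le_of_dvd (by positivity) h0
  have h2 : 2 ^ (γ - 1) < 2 ^ γ := Nat.pow_lt_pow_right one_lt_two (by omega)
  omega

end numeric

lemma cf_h : cf γ ((2 ^ γ : ℕ) : ZMod (2 ^ (γ + 1))) = 0 := by
  rw [cf_natCast, ZMod.natCast_self]

@[simp] lemma two_pow_zmod : (2 : ZMod (2 ^ γ)) ^ γ = 0 := by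
  have := ZMod.natCast_self (2 ^ γ)
  push_cast at this
  exact this

@[simp] lemma cf_two : cf γ (2 : ZMod (2 ^ (γ + 1))) = 2 := by
  have : ((2 : ℕ) : ZMod (2 ^ (γ + 1))) = (2 : ZMod (2 ^ (γ + 1))) := by push_cast; rfl
  rw [← this, cf_natCast]; push_cast; rfl

lemma u_central (g : Heis γ) : u γ * g = g * u γ := by
  ext <;> simp [u, map_pow] <;> try ring

lemma v_central (g : Heis γ) : v γ * g = g * v γ := by
  ext <;> simp [v, map_pow] <;> try ring


section withgamma
variable {γ : ℕ}

lemma two_h_num (hγ : 1 ≤ γ) : (2 : ZMod (2 ^ (γ + 1))) ^ γ + 2 ^ γ = 0 := by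
  have := two_h (γ := γ) hγ
  push_cast at this
  exact this

lemma two_h'_num (hγ : 1 ≤ γ) : (2 : ZMod (2 ^ γ)) ^ (γ - 1) + 2 ^ (γ - 1) = 0 := by
  have := two_h' (γ := γ) hγ
  push_cast at this
  exact this

lemma h_ne_num (hγ : 1 ≤ γ) : (2 : ZMod (2 ^ (γ + 1))) ^ γ ≠ 0 := by
  have := h_ne (γ := γ) hγ
  push_cast at this
  exact this

lemma h'_ne_num (hγ : 1 ≤ γ) : (2 : ZMod (2 ^ γ)) ^ (γ - 1) ≠ 0 := by
  have := h'_ne (γ := γ) hγ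
  push_cast at this
  exact this

lemma uu (hγ : 1 ≤ γ) : u γ * u γ = 1 := by
  ext <;> simp [u, map_pow, two_h_num hγ, two_h'_num hγ]

lemma vv (hγ : 1 ≤ γ) : v γ * v γ = 1 := by
  ext <;> simp [v, map_pow, two_h_num hγ, two_h'_num hγ]

lemma uv_comm : u γ * v γ = v γ * u γ := by
  ext <;> simp [u, v, map_pow] <;> try ring

/-- the subgroup {1, u, v, uv} -/
def S (hγ : 1 ≤ γ) : Subgroup (Heis γ) where
  carrier := {1, u γ, v γ, u γ * v γ}
  one_mem' := by left; rfl
  inv_mem' := by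
    intro a ha
    simp only [Set.mem_insert_iff, Set.mem_singleton_iff] at ha ⊢
    rcases ha with rfl | rfl | rfl | rfl
    · left; simp
    · right; left
      rw [inv_eq_iff_mul_eq_one, uu hγ]
    · right; right; left
      rw [inv_eq_iff_mul_eq_one, vv hγ]
    · right; right; right
      rw [inv_eq_iff_mul_eq_one, mul_assoc, ← mul_assoc (v γ), ← uv_comm,
        mul_assoc (u γ) (v γ), vv hγ, mul_one, uu hγ]
  mul_mem' := by
    have h1 : u γ * (u γ * v γ) = v γ := by rw [← mul_assoc, uu hγ, one_mul]
    have h2 : v γ * (u γ * v γ) = u γ := by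
      rw [uv_comm, ← mul_assoc, vv hγ, one_mul]
    have h3 : (u γ * v γ) * u γ = v γ := by
      rw [mul_assoc, ← uv_comm, ← mul_assoc, uu hγ, one_mul]
    have h4 : (u γ * v γ) * v γ = u γ := by rw [mul_assoc, vv hγ, mul_one]
    have h5 : (u γ * v γ) * (u γ * v γ) = 1 := by
      rw [mul_assoc, h2, uu hγ]
    intro a b ha hb
    simp only [Set.mem_insert_iff, Set.mem_singleton_iff] at ha hb ⊢
    rcases ha with rfl | rfl | rfl | rfl <;> rcases hb with rfl | rfl | rfl | rfl
    · exact Or.inl (one_mul 1)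
    · exact Or.inr (Or.inl (one_mul _))
    · exact Or.inr (Or.inr (Or.inl (one_mul _)))
    · exact Or.inr (Or.inr (Or.inr (one_mul _)))
    · exact Or.inr (Or.inl (mul_one _))
    · exact Or.inl (uu hγ)
    · exact Or.inr (Or.inr (Or.inr rfl))
    · exact Or.inr (Or.inr (Or.inl h1))
    · exact Or.inr (Or.inr (Or.inl (mul_one _)))
    · exact Or.inr (Or.inr (Or.inr uv_comm.symm))
    · exact Or.inl (vv hγ)
    · exact Or.inr (Or.inl h2)
    · exact Or.inr (Or.inr (Or.inr (mul_one _)))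
    · exact Or.inr (Or.inr (Or.inl h3))
    · exact Or.inr (Or.inl h4)
    · exact Or.inl h5

def P : Subgroup (Heis γ) := Subgroup.closure {u γ, v γ}

lemma P_le_S (hγ : 1 ≤ γ) : P (γ := γ) ≤ S hγ := by
  apply Subgroup.closure_le _ |>.2
  rintro g (rfl | rfl)
  · exact Or.inr (Or.inl rfl)
  · exact Or.inr (Or.inr (Or.inl rfl))

instance P_normal : (P (γ := γ)).Normal := by
  constructor
  intro n hn g
  have hc : ∀ m ∈ ({u γ, v γ} : Set (Heis γ)), ∀ k : Heis γ, m * k = k * m := by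
    rintro m (rfl | rfl) k
    · exact u_central k
    · exact v_central k
  have hcenter : n * g = g * n := by
    induction hn using Subgroup.closure_induction with
    | mem m hm => exact hc m hm g
    | one => simp
    | mul a b _ _ ha hb => rw [mul_assoc, hb, ← mul_assoc, ha, mul_assoc]
    | inv a _ ha =>
      rw [inv_mul_eq_iff_eq_mul, ← mul_assoc, ha, mul_assoc, mul_inv_cancel, mul_one]
  rw [← hcenter, mul_assoc, mul_inv_cancel, mul_one]
  exact hn

lemma Ah_not_mem_P (hγ : 1 ≤ γ) : (A : Heis γ) ^ 2 ^ γ ∉ P := by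
  intro hmem
  have hS := P_le_S hγ hmem
  rw [A_pow] at hS
  have huv : u γ * v γ =
      ⟨((2 ^ γ : ℕ) : ZMod (2 ^ (γ + 1))), ((2 ^ γ : ℕ) : ZMod (2 ^ (γ + 1))), 0⟩ := by
    ext <;> simp [u, v, map_pow, two_h'_num hγ]
  rcases hS with h | h | h | h
  · exact h_ne hγ (congrArg Heis.x h)
  · exact h'_ne hγ (congrArg Heis.z h).symm
  · exact h_ne hγ (congrArg Heis.x h)
  · rw [huv] at h
    exact h_ne hγ (congrArg Heis.y h).symm

lemma c_inv (n : ℕ) :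
    ((⟨0, 0, -(n : ZMod (2 ^ γ))⟩ : Heis γ))⁻¹ = ⟨0, 0, (n : ZMod (2 ^ γ))⟩ := by
  ext <;> simp

lemma relu : (A : Heis γ) ^ 2 ^ γ * ((pcomm A B) ^ 2 ^ (γ - 1))⁻¹ = u γ := by
  rw [pcommAB, c_pow, c_inv, A_pow]
  ext <;> simp [u]

lemma relv : (B : Heis γ) ^ 2 ^ γ * ((pcomm A B) ^ 2 ^ (γ - 1))⁻¹ = v γ := by
  rw [pcommAB, c_pow, c_inv, B_pow]
  ext <;> simp [v, cf_h, map_pow]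

/-- generators in H -/
def gmap (γ : ℕ) : Fin 2 → Heis γ := fun i => if i = 0 then A else B

/-- generators in the quotient H/P -/
def fmap (γ : ℕ) : Fin 2 → Heis γ ⧸ P :=
  fun i => QuotientGroup.mk (gmap γ i)

lemma lift_fmap_eq :
    FreeGroup.lift (fmap γ) =
      (QuotientGroup.mk' (P (γ := γ))).comp (FreeGroup.lift (gmap γ)) := by
  apply FreeGroup.ext_hom
  intro i
  simp [fmap, FreeGroup.lift_apply_of]

lemma rels_hold (hγ : 1 ≤ γ) :
    ∀ r ∈ relsIII γ, FreeGroup.lift (fmap γ) r = 1 := by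
  intro r hr
  rw [lift_fmap_eq]
  have g0 : gmap γ 0 = A := rfl
  have g1 : gmap γ 1 = B := rfl
  have hpcomm : FreeGroup.lift (gmap γ) (pcomm (FreeGroup.of 0) (FreeGroup.of 1))
      = pcomm (A : Heis γ) B := by
    simp [pcomm, FreeGroup.lift_apply_of, g0, g1]
  have hA1 : (A : Heis γ) ^ 2 ^ (γ + 1) = 1 := by
    rw [A_pow, ZMod.natCast_self]; rfl
  have hB1 : (B : Heis γ) ^ 2 ^ (γ + 1) = 1 := by
    rw [B_pow, ZMod.natCast_self]; rfl
  have hC1 : (pcomm (A : Heis γ) B) ^ 2 ^ γ = 1 := by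
    rw [pcommAB, c_pow, ZMod.natCast_self]; ext <;> simp
  simp only [relsIII, Set.mem_insert_iff, Set.mem_singleton_iff] at hr
  rcases hr with rfl | rfl | rfl | rfl | rfl | rfl | rfl
  · rw [MonoidHom.comp_apply, map_pow, FreeGroup.lift_apply_of, g0, hA1, map_one]
  · rw [MonoidHom.comp_apply, map_pow, FreeGroup.lift_apply_of, g1, hB1, map_one]
  · rw [MonoidHom.comp_apply, map_pow, hpcomm, hC1, map_one]
  · rw [MonoidHom.comp_apply]
    have : FreeGroup.lift (gmap γ) (pcomm (pcomm (FreeGroup.of 0) (FreeGroup.of 1)) (FreeGroup.of 0))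
        = pcomm (pcomm (A : Heis γ) B) A := by
      simp [pcomm, FreeGroup.lift_apply_of, g0, g1]
    rw [this, pcommAB, pcomm_eq_one_of_comm (central (-1) A), map_one]
  · rw [MonoidHom.comp_apply]
    have : FreeGroup.lift (gmap γ) (pcomm (pcomm (FreeGroup.of 0) (FreeGroup.of 1)) (FreeGroup.of 1))
        = pcomm (pcomm (A : Heis γ) B) B := by
      simp [pcomm, FreeGroup.lift_apply_of, g0, g1]
    rw [this, pcommAB, pcomm_eq_one_of_comm (central (-1) B), map_one]
  · rw [MonoidHom.comp_apply, map_mul, map_inv, map_pow, map_pow, FreeGroup.lift_apply_of,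
      g0, hpcomm, relu]
    rw [QuotientGroup.mk'_apply, QuotientGroup.eq_one_iff]
    exact Subgroup.subset_closure (Or.inl rfl)
  · rw [MonoidHom.comp_apply, map_mul, map_inv, map_pow, map_pow, FreeGroup.lift_apply_of,
      g1, hpcomm, relv]
    rw [QuotientGroup.mk'_apply, QuotientGroup.eq_one_iff]
    exact Subgroup.subset_closure (Or.inr rfl)

/-- The key nonvanishing fact: `a^(2^γ) ≠ 1` in the presented group. -/
lemma of_pow_ne_one (hγ : 1 ≤ γ) :
    (PresentedGroup.of 0 : PresentedGroup (relsIII γ)) ^ 2 ^ γ ≠ 1 := by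
  intro h1
  have := congrArg (PresentedGroup.toGroup (rels_hold hγ)) h1
  rw [map_pow, PresentedGroup.toGroup.of, map_one] at this
  have hval : (fmap γ 0) ^ 2 ^ γ = 1 := this
  have : (QuotientGroup.mk ((A : Heis γ) ^ 2 ^ γ) : Heis γ ⧸ P) = 1 := by
    rw [QuotientGroup.mk_pow]; exact hval
  rw [QuotientGroup.eq_one_iff] at this
  exact Ah_not_mem_P hγ this

end withgamma

end ExcAux

/-- If `K` has class at most three, `N` is a central subgroup of `K` with `K/N`
isomorphic to the exceptional type group `G`, and `x, y ∈ K` project to the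
generators `a, b` of `G`, then `x^(2^γ)` is central in `K` but not in `N`;
in particular `N ≠ Z(K)`. -/
theorem exceptional_type_central_quotient_obstruction
    (γ : ℕ) (hγ : 1 ≤ γ) (K : Type*) [Group K]
    (hclass3 : (⊤ : Subgroup K).lowerCentralSeries 3 = ⊥)
    (N : Subgroup K) [N.Normal] (hNcentral : N ≤ Subgroup.center K)
    (φ : (K ⧸ N) ≃* PresentedGroup (relsIII γ))
    (x y : K)
    (hx : φ (QuotientGroup.mk x) = PresentedGroup.of 0)
    (hy : φ (QuotientGroup.mk y) = PresentedGroup.of 1) :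
    x ^ 2 ^ γ ∈ Subgroup.center K ∧ x ^ 2 ^ γ ∉ N ∧ N ≠ Subgroup.center K := by
  classical
  have hmemN : ∀ g : K, g ∈ N ↔ φ (QuotientGroup.mk g) = 1 := by
    intro g
    rw [← QuotientGroup.eq_one_iff (N := N) g]
    constructor
    · intro hg; rw [hg, map_one]
    · intro hg; exact φ.injective (by rw [hg, map_one])
  -- the relation a^(2^γ) = b^(2^γ) in the presented group
  have hfree : (FreeGroup.of 0 : FreeGroup (Fin 2)) ^ 2 ^ γ *
      ((FreeGroup.of 1 : FreeGroup (Fin 2)) ^ 2 ^ γ)⁻¹ =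
      (FreeGroup.of 0 ^ 2 ^ γ * (pcomm (FreeGroup.of 0) (FreeGroup.of 1) ^ 2 ^ (γ - 1))⁻¹) *
      (FreeGroup.of 1 ^ 2 ^ γ * (pcomm (FreeGroup.of 0) (FreeGroup.of 1) ^ 2 ^ (γ - 1))⁻¹)⁻¹ := by
    group
  have h6 : (QuotientGroup.mk (FreeGroup.of 0 ^ 2 ^ γ *
      (pcomm (FreeGroup.of 0) (FreeGroup.of 1) ^ 2 ^ (γ - 1))⁻¹) :
      PresentedGroup (relsIII γ)) = 1 := by
    rw [QuotientGroup.eq_one_iff]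
    apply Subgroup.subset_normalClosure
    simp only [relsIII, Set.mem_insert_iff, Set.mem_singleton_iff]
    tauto
  have h7 : (QuotientGroup.mk (FreeGroup.of 1 ^ 2 ^ γ *
      (pcomm (FreeGroup.of 0) (FreeGroup.of 1) ^ 2 ^ (γ - 1))⁻¹) :
      PresentedGroup (relsIII γ)) = 1 := by
    rw [QuotientGroup.eq_one_iff]
    apply Subgroup.subset_normalClosure
    simp only [relsIII, Set.mem_insert_iff, Set.mem_singleton_iff]
    tauto
  have hrel : (PresentedGroup.of 0 : PresentedGroup (relsIII γ)) ^ 2 ^ γ *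
      ((PresentedGroup.of 1 : PresentedGroup (relsIII γ)) ^ 2 ^ γ)⁻¹ = 1 := by
    have e : ∀ i : Fin 2, (PresentedGroup.of i : PresentedGroup (relsIII γ)) =
        QuotientGroup.mk (FreeGroup.of i) := fun _ => rfl
    have h6' : (QuotientGroup.mk (FreeGroup.of 0 ^ 2 ^ γ *
        (pcomm (FreeGroup.of 0) (FreeGroup.of 1) ^ 2 ^ (γ - 1))⁻¹) :
        FreeGroup (Fin 2) ⧸ Subgroup.normalClosure (relsIII γ)) = 1 := h6
    have h7' : (QuotientGroup.mk (FreeGroup.of 1 ^ 2 ^ γ *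
        (pcomm (FreeGroup.of 0) (FreeGroup.of 1) ^ 2 ^ (γ - 1))⁻¹) :
        FreeGroup (Fin 2) ⧸ Subgroup.normalClosure (relsIII γ)) = 1 := h7
    have key : QuotientGroup.mk' (Subgroup.normalClosure (relsIII γ))
        ((FreeGroup.of 0 : FreeGroup (Fin 2)) ^ 2 ^ γ *
        ((FreeGroup.of 1 : FreeGroup (Fin 2)) ^ 2 ^ γ)⁻¹) = 1 := by
      rw [hfree, map_mul, map_inv, QuotientGroup.mk'_apply, QuotientGroup.mk'_apply, h6', h7',
        inv_one, mul_one]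
    rw [e, e]
    exact key
  -- d := x^(2^γ) * (y^(2^γ))⁻¹ lies in N, hence is central
  have hdN : x ^ 2 ^ γ * (y ^ 2 ^ γ)⁻¹ ∈ N := by
    rw [hmemN, QuotientGroup.mk_mul, QuotientGroup.mk_inv, QuotientGroup.mk_pow,
      QuotientGroup.mk_pow, map_mul, map_inv, map_pow, map_pow, hx, hy]
    exact hrel
  have hdZ : x ^ 2 ^ γ * (y ^ 2 ^ γ)⁻¹ ∈ Subgroup.center K := hNcentral hdN
  have hcomm_y : Commute (x ^ 2 ^ γ) y := by
    have hxe : x ^ 2 ^ γ = (x ^ 2 ^ γ * (y ^ 2 ^ γ)⁻¹) * y ^ 2 ^ γ := by group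
    rw [hxe]
    have hd : Commute (x ^ 2 ^ γ * (y ^ 2 ^ γ)⁻¹) y :=
      (Subgroup.mem_center_iff.1 hdZ y).symm
    exact hd.mul_left ((Commute.refl y).pow_left _)
  -- K is generated by x, y and N
  have hgen : ∀ (T : Subgroup K), x ∈ T → y ∈ T → N ≤ T → ∀ g : K, g ∈ T := by
    intro T hxT hyT hNT g
    have key : ∀ z : PresentedGroup (relsIII γ),
        z ∈ Subgroup.closure (Set.range PresentedGroup.of) →
        ∃ k, k ∈ T ∧ (QuotientGroup.mk k : K ⧸ N) = φ.symm z := by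
      intro z hz
      induction hz using Subgroup.closure_induction with
      | mem w hw =>
          obtain ⟨i, rfl⟩ := hw
          fin_cases i
          · refine ⟨x, hxT, ?_⟩
            show (QuotientGroup.mk x : K ⧸ N) = φ.symm (PresentedGroup.of 0)
            rw [← hx, MulEquiv.symm_apply_apply]
          · refine ⟨y, hyT, ?_⟩
            show (QuotientGroup.mk y : K ⧸ N) = φ.symm (PresentedGroup.of 1)
            rw [← hy, MulEquiv.symm_apply_apply]
      | one => exact ⟨1, T.one_mem, by rw [QuotientGroup.mk_one, map_one]⟩
      | mul a b _ _ ha hb =>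
          obtain ⟨k1, hk1, e1⟩ := ha
          obtain ⟨k2, hk2, e2⟩ := hb
          exact ⟨k1 * k2, T.mul_mem hk1 hk2,
            by rw [QuotientGroup.mk_mul, e1, e2, map_mul]⟩
      | inv a _ ha =>
          obtain ⟨k1, hk1, e1⟩ := ha
          exact ⟨k1⁻¹, T.inv_mem hk1, by rw [QuotientGroup.mk_inv, e1, map_inv]⟩
    obtain ⟨k, hkT, hk⟩ := key (φ (QuotientGroup.mk g))
      (by rw [PresentedGroup.closure_range_of]; trivial)
    rw [MulEquiv.symm_apply_apply] at hk
    have hkg : k⁻¹ * g ∈ N := (QuotientGroup.eq).1 hk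
    have hge : g = k * (k⁻¹ * g) := by group
    rw [hge]
    exact T.mul_mem hkT (hNT hkg)
  have hxZ : x ^ 2 ^ γ ∈ Subgroup.center K := by
    rw [Subgroup.mem_center_iff]
    intro g
    have hxc : x ∈ Subgroup.centralizer {x ^ 2 ^ γ} := by
      rw [Subgroup.mem_centralizer_iff]
      rintro m rfl
      exact ((Commute.refl x).pow_left _).eq
    have hyc : y ∈ Subgroup.centralizer {x ^ 2 ^ γ} := by
      rw [Subgroup.mem_centralizer_iff]
      rintro m rfl
      exact hcomm_y.eq
    have hNc : N ≤ Subgroup.centralizer {x ^ 2 ^ γ} := by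
      intro n hn
      rw [Subgroup.mem_centralizer_iff]
      rintro m rfl
      exact Subgroup.mem_center_iff.1 (hNcentral hn) _
    have := hgen _ hxc hyc hNc g
    exact (Subgroup.mem_centralizer_iff.1 this _ rfl).symm
  have hxN : x ^ 2 ^ γ ∉ N := by
    intro hmem
    have h1 := (hmemN _).1 hmem
    rw [QuotientGroup.mk_pow, map_pow, hx] at h1
    exact ExcAux.of_pow_ne_one hγ h1
  refine ⟨hxZ, hxN, fun he => hxN ?_⟩
  rw [he]
  exact hxZ
end

section
/- Let K be a nilpotent group of class 3, let x and y be elements of K, and let α > 1 be an integer such that x^(2^α), [x,y]^(2^(α-1)), and x^(2^(α-1))[x,y]^(-2^(α-2)) all centralize the subgroup ⟨x,y⟩ generated by x and y. Then y^(2^(α-1)) commutes with x. -/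
section Aux
variable {G : Type*} [Group G]

lemma central_swap {a : G} (h : ∀ z, a * z = z * a) : ∀ z w : G, a * (z * w) = z * (a * w) :=
  fun z w => by rw [← mul_assoc, h z, mul_assoc]

lemma central_pow {u : G} (hcu : ∀ z : G, u * z = z * u) (n : ℕ) :
    ∀ z : G, u ^ n * z = z * u ^ n :=
  fun z => (Commute.pow_left (show Commute u z from hcu z) n).eq

lemma aux_c_pow (x c u : G) (hu : c * x = x * (c * u)) (hcu : ∀ z : G, u * z = z * u) :
    ∀ n : ℕ, c * x ^ n = x ^ n * (c * u ^ n) := by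
  have hu' : ∀ w, c * (x * w) = x * (c * (u * w)) := fun w => by
    rw [← mul_assoc, hu]; simp only [mul_assoc]
  intro n
  induction n with
  | zero => simp
  | succ n ih =>
    have ih' : ∀ w, c * (x ^ n * w) = x ^ n * (c * (u ^ n * w)) := fun w => by
      rw [← mul_assoc, ih]; simp only [mul_assoc]
    rw [pow_succ' x, pow_succ' u, hu' (x ^ n), hcu (x ^ n), ih' u, mul_assoc,
      hcu (u ^ n)]

lemma aux_pow_c (x c u : G) (hu : c * x = x * (c * u)) (hcu : ∀ z : G, u * z = z * u) :
    ∀ n : ℕ, c ^ n * x = x * (c ^ n * u ^ n) := by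
  intro n
  induction n with
  | zero => simp
  | succ n ih =>
    have ih' : ∀ w, c ^ n * (x * w) = x * (c ^ n * (u ^ n * w)) := fun w => by
      rw [← mul_assoc, ih]; simp only [mul_assoc]
    have hun := central_pow hcu n
    rw [pow_succ c, pow_succ u, mul_assoc, hu, ih' (c * u), hun (c * u)]
    simp only [mul_assoc]
    rw [hcu (u ^ n)]

lemma aux_xny (x y c u : G) (hc : x * y = y * (x * c)) (hu : c * x = x * (c * u))
    (hcu : ∀ z : G, u * z = z * u) :
    ∀ n : ℕ, x ^ n * y = y * (x ^ n * (c ^ n * u ^ n.choose 2)) := by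
  have hc' : ∀ w, x * (y * w) = y * (x * (c * w)) := fun w => by
    rw [← mul_assoc, hc]; simp only [mul_assoc]
  intro n
  induction n with
  | zero => simp
  | succ n ih =>
    have hcx' : ∀ w, c * (x ^ n * w) = x ^ n * (c * (u ^ n * w)) := fun w => by
      rw [← mul_assoc, aux_c_pow x c u hu hcu n]; simp only [mul_assoc]
    have hun := central_pow hcu n
    rw [pow_succ' x, Nat.choose_succ_succ, Nat.choose_one_right, pow_succ' c, pow_add,
      mul_assoc, mul_assoc, ih, hc' _, hcx' _]
    simp only [mul_assoc]
    rw [central_swap hun (c ^ n) (u ^ n.choose 2)]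

lemma aux_xyn (x y c v : G) (hc : x * y = y * (x * c)) (hv : c * y = y * (c * v))
    (hcv : ∀ z : G, v * z = z * v) :
    ∀ n : ℕ, x * y ^ n = y ^ n * (x * (v ^ n.choose 2 * c ^ n)) := by
  have hc' : ∀ w, x * (y * w) = y * (x * (c * w)) := fun w => by
    rw [← mul_assoc, hc]; simp only [mul_assoc]
  intro n
  induction n with
  | zero => simp
  | succ n ih =>
    have ih' : ∀ w, x * (y ^ n * w) = y ^ n * (x * (v ^ n.choose 2 * (c ^ n * w))) :=
      fun w => by rw [← mul_assoc, ih]; simp only [mul_assoc]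
    have hvn := central_pow hcv n
    have hvE := central_pow hcv (n.choose 2)
    rw [pow_succ' y, Nat.choose_succ_succ, Nat.choose_one_right, pow_succ c, pow_add,
      hc' _, aux_c_pow y c v hv hcv n, ih' _]
    simp only [mul_assoc]
    rw [← hvn c, ← central_swap hvn (c ^ n) c, central_swap hvE (v ^ n) (c ^ n * c)]
end Aux

open scoped commutatorElement

/-- Let `K` be a nilpotent group of class 3, `x, y ∈ K`, and `α > 1` an integer
such that `x^(2^α)`, `[x,y]^(2^(α-1))`, and `x^(2^(α-1))[x,y]^(-2^(α-2))`
centralize `⟨x,y⟩`.  Then `y^(2^(α-1))` commutes with `x`. -/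
theorem power_commutes_of_centralizing (K : Type*) [Group K]
    (hclass3 : (⊤ : Subgroup K).lowerCentralSeries 3 = ⊥)
    (x y : K) (α : ℕ) (hα : 1 < α)
    (h1 : ∀ g ∈ Subgroup.closure {x, y}, Commute (x ^ 2 ^ α) g)
    (h2 : ∀ g ∈ Subgroup.closure {x, y}, Commute (pcomm x y ^ 2 ^ (α - 1)) g)
    (h3 : ∀ g ∈ Subgroup.closure {x, y},
      Commute (x ^ 2 ^ (α - 1) * pcomm x y ^ (-(2 ^ (α - 2) : ℤ))) g) :
    Commute (y ^ 2 ^ (α - 1)) x := by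
  clear h1
  have hcent : ∀ g ∈ (⊤ : Subgroup K).lowerCentralSeries 2, ∀ z : K, g * z = z * g := by
    intro g hg z
    have h4 : ⁅g, z⁆ ∈ (⊤ : Subgroup K).lowerCentralSeries 3 :=
      Subgroup.commutator_mem_commutator hg (Subgroup.mem_top z)
    rw [hclass3, Subgroup.mem_bot] at h4
    exact (commutatorElement_eq_one_iff_commute.mp h4).eq
  set c := pcomm x y with hc_def
  set u := pcomm c x with hu_def
  set v := pcomm c y with hv_def
  have hcmem : c ∈ (⊤ : Subgroup K).lowerCentralSeries 1 := by
    have : c = ⁅x⁻¹, y⁻¹⁆ := by simp [hc_def, pcomm, commutatorElement_def]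
    rw [this]
    exact Subgroup.commutator_mem_commutator (Subgroup.mem_top _) (Subgroup.mem_top _)
  have humem : u ∈ (⊤ : Subgroup K).lowerCentralSeries 2 := by
    have : u = ⁅c⁻¹, x⁻¹⁆ := by simp [hu_def, pcomm, commutatorElement_def]
    rw [this]
    exact Subgroup.commutator_mem_commutator (inv_mem hcmem) (Subgroup.mem_top _)
  have hvmem : v ∈ (⊤ : Subgroup K).lowerCentralSeries 2 := by
    have : v = ⁅c⁻¹, y⁻¹⁆ := by simp [hv_def, pcomm, commutatorElement_def]
    rw [this]
    exact Subgroup.commutator_mem_commutator (inv_mem hcmem) (Subgroup.mem_top _)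
  have hcu : ∀ z : K, u * z = z * u := hcent u humem
  have hcv : ∀ z : K, v * z = z * v := hcent v hvmem
  have hc : x * y = y * (x * c) := by simp [hc_def, pcomm, mul_assoc]
  have hu : c * x = x * (c * u) := by simp [hu_def, pcomm, mul_assoc]
  have hv : c * y = y * (c * v) := by simp [hv_def, pcomm, mul_assoc]
  -- arithmetic setup
  set a : ℕ := 2 ^ (α - 2) with ha_def
  have h2a : 2 ^ (α - 1) = 2 * a := by
    rw [ha_def, ← pow_succ']
    congr 1
    omega
  have hE : (2 * a).choose 2 = a * (2 * a - 1) := by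
    rw [Nat.choose_two_right, show 2 * a * (2 * a - 1) = a * (2 * a - 1) * 2 by ring]
    exact Nat.mul_div_cancel _ (by norm_num)
  -- memberships
  have hxmem : x ∈ Subgroup.closure ({x, y} : Set K) :=
    Subgroup.subset_closure (by simp)
  have hymem : y ∈ Subgroup.closure ({x, y} : Set K) :=
    Subgroup.subset_closure (by simp)
  -- the zpow in h3 is (c ^ a)⁻¹
  have hzp : c ^ (-(2 ^ (α - 2) : ℤ)) = (c ^ a)⁻¹ := by
    have : ((2 : ℤ) ^ (α - 2)) = ((a : ℕ) : ℤ) := by push_cast [ha_def]; ring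
    rw [this, zpow_neg, zpow_natCast]
  -- E1 : v ^ (2a) = 1  (from h2 applied to y)
  have hE1 : v ^ (2 * a) = 1 := by
    have h := (h2 y hymem).eq
    rw [h2a, aux_pow_c y c v hv hcv (2 * a), ← mul_assoc] at h
    exact mul_eq_left.mp h
  -- E2 : u ^ a = 1  (from h3 applied to x)
  have key2x : (c ^ a)⁻¹ * x = x * ((u ^ a)⁻¹ * (c ^ a)⁻¹) := by
    have h := aux_pow_c x c u hu hcu a
    have h2' := congrArg (fun w => (c ^ a)⁻¹ * w * (u ^ a)⁻¹ * (c ^ a)⁻¹) h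
    simp only [mul_assoc, inv_mul_cancel_left, mul_inv_cancel_left,
      mul_inv_cancel, mul_one, inv_mul_cancel] at h2'
    simpa [mul_assoc] using h2'.symm
  have hE2 : u ^ a = 1 := by
    have h := (h3 x hxmem).eq
    rw [hzp] at h
    rw [mul_assoc, key2x, ← mul_assoc, ← pow_succ, ← mul_assoc, ← mul_assoc x,
      ← pow_succ'] at h
    have h' := mul_right_cancel h
    exact inv_eq_one.mp (mul_eq_left.mp h')
  -- E3 : c ^ (2a) = v ^ a  (from h3 applied to y)
  have key2y : (c ^ a)⁻¹ * y = y * ((v ^ a)⁻¹ * (c ^ a)⁻¹) := by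
    have h := aux_pow_c y c v hv hcv a
    have h2' := congrArg (fun w => (c ^ a)⁻¹ * w * (v ^ a)⁻¹ * (c ^ a)⁻¹) h
    simp only [mul_assoc, inv_mul_cancel_left, mul_inv_cancel_left,
      mul_inv_cancel, mul_one, inv_mul_cancel] at h2'
    simpa [mul_assoc] using h2'.symm
  have huE : u ^ ((2 * a).choose 2) = 1 := by
    rw [hE, pow_mul, hE2, one_pow]
  have hE3 : c ^ (2 * a) = v ^ a := by
    have h := (h3 y hymem).eq
    rw [hzp, mul_assoc, key2y, ← mul_assoc, h2a,
      aux_xny x y c u hc hu hcu (2 * a), huE, mul_one] at h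
    simp only [mul_assoc] at h
    have h' := mul_left_cancel (mul_left_cancel h)
    rw [← mul_assoc] at h'
    exact mul_inv_eq_one.mp (mul_eq_right.mp h')
  have harith : a * (2 * a - 1) + a = 2 * a * a := by
    have hgen : ∀ m : ℕ, 1 ≤ m → m * (2 * m - 1) + m = 2 * m * m := by
      intro m hm
      obtain ⟨b, rfl⟩ : ∃ b, m = b + 1 := ⟨m - 1, by omega⟩
      rw [show 2 * (b + 1) - 1 = 2 * b + 1 by omega]
      ring
    exact hgen a Nat.one_le_two_pow
  have hfin : v ^ ((2 * a).choose 2) * c ^ (2 * a) = 1 := by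
    rw [hE3, hE, ← pow_add, harith, pow_mul, hE1, one_pow]
  show y ^ 2 ^ (α - 1) * x = x * y ^ 2 ^ (α - 1)
  rw [h2a]
  have hx : x * y ^ (2 * a) = y ^ (2 * a) * x := by
    rw [aux_xyn x y c v hc hv hcv (2 * a), hfin, mul_one]
  exact hx.symm
end
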